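/- arXiv:1211.6372 — 4 statements merged into one kernel-verified Lean document; each statement's English description precedes it below -/
import Mathlib

section
/- Let p be an odd prime. Then the group SL₂(F_p) is (p−1)/2-quasirandom, i.e., every nontrivial complex unitary representation of SL₂(F_p) has dimension at least (p−1)/2. -/
open Matrix Polynomial Module
set_option maxRecDepth 8000
variable (p : ℕ) [Fact p.Prime]
abbrev SL2 := Matrix.SpecialLinearGroup (Fin 2) (ZMod p)
def Um (x : ZMod p) : SL2 p := ⟨!![1,x;0,1], by simp [Matrix.det_fin_two_of]⟩
def Lm (x : ZMod p) : SL2 p := ⟨!![1,0;x,1], by simp [Matrix.det_fin_two_of]⟩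
def Wm : SL2 p := ⟨!![0,1;-1,0], by simp [Matrix.det_fin_two_of]⟩
def Dm (a b : ZMod p) (h : a * b = 1) : SL2 p := ⟨!![a,0;0,b], by
  rw [Matrix.det_fin_two_of, mul_zero, sub_zero, h]⟩
lemma Um_mul (x y : ZMod p) : Um p x * Um p y = Um p (x+y) := by
  ext i j
  simp only [Matrix.SpecialLinearGroup.coe_mul]
  fin_cases i <;> fin_cases j <;>
    simp [Um, Matrix.SpecialLinearGroup.coe_mul, Matrix.mul_apply, Fin.sum_univ_two] <;> ring
lemma Um_pow (n : ℕ) : (Um p 1)^n = Um p n := by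
  induction n with
  | zero => ext i j; simp only [pow_zero]; fin_cases i <;> fin_cases j <;> simp [Um]
  | succ n ih => rw [pow_succ, ih, Um_mul]; push_cast; ring_nf
lemma Um_pow_p : (Um p 1)^p = 1 := by
  rw [Um_pow]; ext i j; fin_cases i <;> fin_cases j <;> simp [Um, ZMod.natCast_self]
lemma Dm_Um (a b : ZMod p) (h : a * b = 1) (x : ZMod p) :
    Dm p a b h * Um p x = Um p (a^2 * x) * Dm p a b h := by
  ext i j
  simp only [Matrix.SpecialLinearGroup.coe_mul]
  fin_cases i <;> fin_cases j <;>
    simp [Um, Dm, Matrix.SpecialLinearGroup.coe_mul, Matrix.mul_apply, Fin.sum_univ_two]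
  linear_combination (-(a * x)) * h
lemma Wm_Um (x : ZMod p) : Wm p * Um p x = Lm p (-x) * Wm p := by
  ext i j
  simp only [Matrix.SpecialLinearGroup.coe_mul]
  fin_cases i <;> fin_cases j <;>
    simp [Um, Lm, Wm, Matrix.SpecialLinearGroup.coe_mul, Matrix.mul_apply, Fin.sum_univ_two]

lemma det_rel (g : SL2 p) : g.1 0 0 * g.1 1 1 - g.1 0 1 * g.1 1 0 = 1 := by
  rw [← Matrix.det_fin_two]; exact g.2

lemma decomp (g : SL2 p) (hc : g.1 1 0 ≠ 0) :
    g = Um p ((g.1 0 0 - 1) * (g.1 1 0)⁻¹) * Lm p (g.1 1 0)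
        * Um p ((g.1 1 1 - 1) * (g.1 1 0)⁻¹) := by
  have hd := det_rel p g
  set a := g.1 0 0; set b := g.1 0 1; set c := g.1 1 0; set d := g.1 1 1
  ext i j
  simp only [Matrix.SpecialLinearGroup.coe_mul]
  fin_cases i <;> fin_cases j <;>
    simp [Um, Lm, Matrix.SpecialLinearGroup.coe_mul, Matrix.mul_apply, Fin.sum_univ_two] <;>
    (try field_simp) <;> first | linear_combination hd | linear_combination -hd | linear_combination c * hd | linear_combination (-c) * hd | ring | simp [d]

lemma hom_trivial {G : Type} [Group G] (φ : SL2 p →* G) (h : φ (Um p 1) = 1) :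
    ∀ g : SL2 p, φ g = 1 := by
  have hU : ∀ x : ZMod p, φ (Um p x) = 1 := by
    intro x
    have : Um p x = (Um p 1) ^ x.val := by
      rw [Um_pow, ZMod.natCast_rightInverse x]
    rw [this, map_pow, h, one_pow]
  have hL : ∀ x : ZMod p, φ (Lm p x) = 1 := by
    intro x
    have h1 : φ (Wm p) * φ (Um p (-x)) = φ (Lm p x) * φ (Wm p) := by
      rw [← _root_.map_mul, ← _root_.map_mul, Wm_Um, neg_neg]
    rw [hU, mul_one] at h1
    have h2 : φ (Lm p x) * φ (Wm p) = 1 * φ (Wm p) := by rw [one_mul]; exact h1.symm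
    exact mul_right_cancel h2
  have key : ∀ g : SL2 p, g.1 1 0 ≠ 0 → φ g = 1 := by
    intro g hc
    rw [decomp p g hc, _root_.map_mul, _root_.map_mul, hU, hL, hU, mul_one, mul_one]
  intro g
  by_cases hc : g.1 1 0 = 0
  · have hd : g.1 1 1 ≠ 0 := by
      intro h0
      have := det_rel p g
      rw [hc, h0] at this
      simp at this
    have h2 : (g * Lm p 1).1 1 0 ≠ 0 := by
      have : (g * Lm p 1).1 1 0 = g.1 1 0 + g.1 1 1 := by
        simp only [Matrix.SpecialLinearGroup.coe_mul]
        simp [Lm, Matrix.SpecialLinearGroup.coe_mul, Matrix.mul_apply, Fin.sum_univ_two]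
      rw [this, hc, zero_add]
      exact hd
    have := key _ h2
    rw [_root_.map_mul, hL, mul_one] at this
    exact this
  · exact key g hc


lemma exists_eigen (p : ℕ) [Fact p.Prime] {d : ℕ} (hd : 0 < d)
    (A : Matrix (Fin d) (Fin d) ℂ) (hAp : A ^ p = 1) (hA1 : A ≠ 1) :
    ∃ μ : ℂ, μ ≠ 1 ∧ μ ^ p = 1 ∧
      Module.End.HasEigenvalue (Matrix.toLinAlgEquiv' A : Module.End ℂ (Fin d → ℂ)) μ := by
  haveI : NeZero d := ⟨hd.ne'⟩
  set f : Module.End ℂ (Fin d → ℂ) := Matrix.toLinAlgEquiv' A with hf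
  have hfp : f ^ p = 1 := by rw [hf, ← map_pow, hAp, _root_.map_one]
  have hf1 : f ≠ 1 := by
    intro h
    exact hA1 (Matrix.toLinAlgEquiv'.injective (by rw [← hf, h, _root_.map_one]))
  haveI : Nontrivial (Module.End ℂ (Fin d → ℂ)) := by
    refine ⟨0, 1, fun h => ?_⟩
    have := LinearMap.ext_iff.mp h (Pi.single ⟨0, hd⟩ 1)
    simp only [LinearMap.zero_apply, Module.End.one_apply] at this
    have := congrFun this ⟨0, hd⟩
    simp at this
  have hint : IsIntegral ℂ f := IsIntegral.of_finite ℂ f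
  set q := minpoly ℂ f with hq
  have hmq : q.Monic := minpoly.monic hint
  have hdeg : 0 < q.natDegree := minpoly.natDegree_pos hint
  have hdvd : q ∣ X ^ p - 1 := by
    apply minpoly.dvd
    rw [map_sub, map_pow, aeval_X, _root_.map_one, hfp, sub_self]
  have hsf : Squarefree ((X : ℂ[X]) ^ p - 1) := by
    have hsep : ((X : ℂ[X]) ^ p - C 1).Separable :=
      Polynomial.separable_X_pow_sub_C 1
        (Nat.cast_ne_zero.mpr (Fact.out : p.Prime).ne_zero) one_ne_zero
    rw [_root_.map_one] at hsep
    exact hsep.squarefree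
  have hqsf : Squarefree q := hsf.squarefree_of_dvd hdvd
  have hroot : ∃ μ : ℂ, q.IsRoot μ ∧ μ ≠ 1 := by
    by_contra hno
    push_neg at hno
    have hall : ∀ r ∈ q.roots, r = (1 : ℂ) := fun r hr => hno r (isRoot_of_mem_roots hr)
    have hsplit : q.Splits := IsAlgClosed.splits q
    have heq : q = (X - C 1) ^ Multiset.card q.roots := by
      conv_lhs => rw [hsplit.eq_prod_roots_of_monic hmq]
      rw [Multiset.map_congr (f := fun a => X - C a) (g := fun _ => X - C 1) rfl
        fun r hr => by rw [hall r hr]]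
      rw [Multiset.map_const', Multiset.prod_replicate]
    have hk1 : Multiset.card q.roots ≤ 1 := by
      by_contra hk
      push_neg at hk
      have : (X - C 1) * (X - C 1) ∣ q := by
        rw [heq, ← sq]
        exact pow_dvd_pow _ hk
      exact Polynomial.not_isUnit_X_sub_C 1 (hqsf _ this)
    have hk0 : 1 ≤ Multiset.card q.roots := by
      rcases Nat.eq_zero_or_pos (Multiset.card q.roots) with h0 | h1
      · rw [h0, pow_zero] at heq
        rw [heq] at hdeg
        simp at hdeg
      · exact h1
    have hq1 : q = X - C 1 := by rw [heq, le_antisymm hk1 hk0, pow_one]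
    have haev := minpoly.aeval ℂ f
    rw [← hq, hq1, map_sub, aeval_X, aeval_C, _root_.map_one, sub_eq_zero] at haev
    exact hf1 haev
  obtain ⟨μ, hroot, hμ1⟩ := hroot
  refine ⟨μ, hμ1, ?_, Module.End.hasEigenvalue_iff_isRoot.mpr hroot⟩
  obtain ⟨c, hc⟩ := hdvd
  have h2 := congrArg (Polynomial.eval μ) hc
  rw [eval_mul, hroot, zero_mul, eval_sub, eval_pow, eval_X, eval_one, sub_eq_zero] at h2
  exact h2

lemma eigen_conj {d : ℕ} (A M N : Matrix (Fin d) (Fin d) ℂ) (hMN : M * N = 1)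
    (hNM : N * M = 1) (s : ℕ) (hrel : M * A = A ^ s * M) {μ : ℂ}
    (h : Module.End.HasEigenvalue (Matrix.toLinAlgEquiv' A : Module.End ℂ (Fin d → ℂ)) μ) :
    Module.End.HasEigenvalue (Matrix.toLinAlgEquiv' A : Module.End ℂ (Fin d → ℂ)) (μ ^ s) := by
  obtain ⟨v, hv⟩ := h.exists_hasEigenvector
  have hv1 : A.mulVec v = μ • v := by
    have := hv.apply_eq_smul
    simpa [Matrix.toLinAlgEquiv'_apply, Matrix.toLin'_apply] using this
  have hpow : ∀ n : ℕ, (A ^ n).mulVec v = μ ^ n • v := by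
    intro n
    induction n with
    | zero => simp
    | succ n ih =>
        rw [pow_succ, ← Matrix.mulVec_mulVec, hv1, Matrix.mulVec_smul, ih, smul_smul,
          mul_comm, ← pow_succ]
  have hAN : A * N = N * A ^ s := by
    calc A * N = N * M * (A * N) := by rw [hNM, one_mul]
    _ = N * (M * A) * N := by simp only [mul_assoc]
    _ = N * (A ^ s * M) * N := by rw [hrel]
    _ = N * A ^ s * (M * N) := by simp only [mul_assoc]
    _ = N * A ^ s := by rw [hMN, mul_one]
  have hnz : N.mulVec v ≠ 0 := by
    intro h0
    apply hv.right
    have : (M * N).mulVec v = v := by rw [hMN, Matrix.one_mulVec]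
    rw [← Matrix.mulVec_mulVec, h0, Matrix.mulVec_zero] at this
    exact this.symm
  have heig : A.mulVec (N.mulVec v) = μ ^ s • N.mulVec v := by
    rw [Matrix.mulVec_mulVec, hAN, ← Matrix.mulVec_mulVec, hpow s, Matrix.mulVec_smul]
  apply Module.End.hasEigenvalue_of_hasEigenvector (x := N.mulVec v)
  refine ⟨Module.End.mem_eigenspace_iff.mpr ?_, hnz⟩
  simpa [Matrix.toLinAlgEquiv'_apply, Matrix.toLin'_apply] using heig

lemma card_eigen_le {d : ℕ} (A : Matrix (Fin d) (Fin d) ℂ) (E : Finset ℂ)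
    (hE : ∀ ν ∈ E, Module.End.HasEigenvalue
      (Matrix.toLinAlgEquiv' A : Module.End ℂ (Fin d → ℂ)) ν) : E.card ≤ d := by
  classical
  set f : Module.End ℂ (Fin d → ℂ) := Matrix.toLinAlgEquiv' A
  have hex : ∀ ν : (↑E : Set ℂ), ∃ x, f.HasEigenvector (↑ν) x :=
    fun ν => (hE ν ν.2).exists_hasEigenvector
  choose xs hxs using hex
  have li : LinearIndependent ℂ xs :=
    Module.End.eigenvectors_linearIndependent f (↑E) xs hxs
  have hcard := li.fintype_card_le_finrank
  rw [Module.finrank_fin_fun] at hcard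
  simpa using hcard

lemma card_image_ge (p : ℕ) [Fact p.Prime] (μ : ℂ) (hμ1 : μ ≠ 1) (hμp : μ ^ p = 1) :
    ∃ E : Finset ℂ, (p - 1 ≤ 2 * E.card) ∧
      ∀ ν ∈ E, ∃ t : (ZMod p)ˣ, ν = μ ^ (((t : ZMod p)) ^ 2).val := by
  classical
  refine ⟨Finset.image (fun t : (ZMod p)ˣ => μ ^ (((t : ZMod p)) ^ 2).val) Finset.univ, ?_, ?_⟩
  swap
  · intro ν hν
    obtain ⟨t, _, rfl⟩ := Finset.mem_image.mp hν
    exact ⟨t, rfl⟩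
  haveI : NeZero p := ⟨(Fact.out : p.Prime).ne_zero⟩
  have hord : orderOf μ = p := by
    have h1 : orderOf μ ∣ p := orderOf_dvd_of_pow_eq_one hμp
    rcases ((Fact.out : p.Prime).eq_one_or_self_of_dvd _ h1) with h | h
    · exact absurd (orderOf_eq_one_iff.mp h) hμ1
    · exact h
  set F : (ZMod p)ˣ → ℂ := fun t => μ ^ (((t : ZMod p)) ^ 2).val with hF
  have key := Finset.card_le_mul_card_image (f := F) Finset.univ 2 ?_
  · rwa [Finset.card_univ, ZMod.card_units] at key
  · intro b hb
    obtain ⟨a, _, rfl⟩ := Finset.mem_image.mp hb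
    have hsub : ({t ∈ Finset.univ | F t = F a} : Finset (ZMod p)ˣ) ⊆ {a, -a} := by
      intro t ht
      have ht2 : F t = F a := (Finset.mem_filter.mp ht).2
      have hval : (((t : ZMod p)) ^ 2).val = (((a : ZMod p)) ^ 2).val := by
        apply pow_injOn_Iio_orderOf (x := μ)
        · rw [hord]; exact Set.mem_Iio.mpr (ZMod.val_lt _)
        · rw [hord]; exact Set.mem_Iio.mpr (ZMod.val_lt _)
        · exact ht2
      have hsq : ((t : ZMod p)) ^ 2 = ((a : ZMod p)) ^ 2 := by
        have := congrArg (fun n : ℕ => (n : ZMod p)) hval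
        simpa [ZMod.natCast_rightInverse _] using this
      have hfac : ((t : ZMod p) - a) * ((t : ZMod p) + a) = 0 := by
        linear_combination hsq
      rcases mul_eq_zero.mp hfac with h | h
      · have : (t : ZMod p) = a := by linear_combination h
        simp [Finset.mem_insert, Units.ext this]
      · have : (t : ZMod p) = ((-a : (ZMod p)ˣ) : ZMod p) := by
          rw [Units.val_neg]; linear_combination h
        simp [Finset.mem_insert, Units.ext this]
    calc ({t ∈ Finset.univ | F t = F a} : Finset (ZMod p)ˣ).card ≤ ({a, -a} : Finset (ZMod p)ˣ).card :=
          Finset.card_le_card hsub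
    _ ≤ 2 := (Finset.card_insert_le _ _).trans (by simp)

theorem stmt1 (p : ℕ) [Fact p.Prime] (hp : Odd p) :
    ∀ (d : ℕ)
      (ρ : Matrix.SpecialLinearGroup (Fin 2) (ZMod p) →* Matrix.unitaryGroup (Fin d) ℂ),
      ρ ≠ 1 → (p - 1) / 2 ≤ d := by
  intro d ρ hρ
  classical
  haveI : NeZero p := ⟨(Fact.out : p.Prime).ne_zero⟩
  have hU1 : ρ (Um p 1) ≠ 1 := by
    intro h
    apply hρ
    ext g
    rw [hom_trivial p ρ h g, MonoidHom.one_apply]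
  rcases Nat.eq_zero_or_pos d with rfl | hd
  · exact absurd (Subsingleton.elim _ _) hU1
  set A : Matrix (Fin d) (Fin d) ℂ :=
    ((ρ (Um p 1) : Matrix.unitaryGroup (Fin d) ℂ) : Matrix (Fin d) (Fin d) ℂ) with hA
  have hA1 : A ≠ 1 := by
    intro h
    exact hU1 (Subtype.ext (by rw [hA] at h; exact h))
  have hAp : A ^ p = 1 := by
    have h1 : (ρ (Um p 1)) ^ p = 1 := by rw [← map_pow, Um_pow_p, _root_.map_one]
    have h2 := congrArg
      (fun u : Matrix.unitaryGroup (Fin d) ℂ => (u : Matrix (Fin d) (Fin d) ℂ)) h1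
    simpa [SubmonoidClass.coe_pow] using h2
  obtain ⟨μ, hμ1, hμp, heig⟩ := exists_eigen p hd A hAp hA1
  have heigs : ∀ t : (ZMod p)ˣ, Module.End.HasEigenvalue
      (Matrix.toLinAlgEquiv' A : Module.End ℂ (Fin d → ℂ)) (μ ^ (((t : ZMod p)) ^ 2).val) := by
    intro t
    have hab : (t : ZMod p) * ((t⁻¹ : (ZMod p)ˣ) : ZMod p) = 1 := by
      rw [← Units.val_mul, mul_inv_cancel, Units.val_one]
    set s := (((t : ZMod p)) ^ 2).val with hs
    have hpow1 : ((Um p 1) ^ s : SL2 p) = Um p ((t : ZMod p) ^ 2) := by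
      rw [Um_pow]
      exact congrArg _ (ZMod.natCast_rightInverse _)
    have hrel : Dm p _ _ hab * Um p 1 = (Um p 1) ^ s * Dm p _ _ hab := by
      rw [Dm_Um, mul_one, hpow1]
    have hρrel := congrArg ρ hrel
    rw [_root_.map_mul, _root_.map_mul, map_pow] at hρrel
    have hM := congrArg
      (fun u : Matrix.unitaryGroup (Fin d) ℂ => (u : Matrix (Fin d) (Fin d) ℂ)) hρrel
    simp only [Submonoid.coe_mul, SubmonoidClass.coe_pow] at hM
    exact eigen_conj A _ _ (Unitary.coe_mul_star_self (ρ (Dm p _ _ hab)))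
      (Unitary.coe_star_mul_self (ρ (Dm p _ _ hab))) s hM heig
  obtain ⟨E, h3, hmem⟩ := card_image_ge p μ hμ1 hμp
  have h1 : ∀ ν ∈ E, Module.End.HasEigenvalue
      (Matrix.toLinAlgEquiv' A : Module.End ℂ (Fin d → ℂ)) ν := by
    intro ν hν
    obtain ⟨t, rfl⟩ := hmem ν hν
    exact heigs t
  have h2 := card_eigen_le A E h1
  omega
end

section
/- For every δ > 0 there exists ε > 0 such that for every finite group G and every A ⊆ G with |A| ≥ δ|G|, there are at least ε|G|² pairs (g,x) ∈ G × G with x ∈ A, xg ∈ A, and gx ∈ A. -/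
open Finset SimpleGraph TripartiteFromTriangles Sum3

theorem stmt8 (δ : ℝ) (hδ : 0 < δ) :
    ∃ ε : ℝ, 0 < ε ∧
      ∀ (G : Type) [Group G] [Fintype G] [DecidableEq G] (A : Finset G),
        δ * Fintype.card G ≤ A.card →
        ε * (Fintype.card G : ℝ) ^ 2
          ≤ ((Finset.univ.filter (fun q : G × G =>
              q.2 ∈ A ∧ q.2 * q.1 ∈ A ∧ q.1 * q.2 ∈ A)).card : ℝ) := by
  set δ' : ℝ := min δ 1 with hδ'def
  have hδ'0 : 0 < δ' := lt_min hδ one_pos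
  have hδ'1 : δ' ≤ 1 := min_le_right _ _
  have htrb : 0 < triangleRemovalBound (δ' / 9) :=
    triangleRemovalBound_pos (by positivity)
  refine ⟨triangleRemovalBound (δ' / 9) * 27, by positivity, ?_⟩
  intro G _ _ _ A hA
  classical
  have hn0 : 0 < (Fintype.card G : ℝ) := by exact_mod_cast Fintype.card_pos
  set n : ℝ := (Fintype.card G : ℝ) with hn
  set S : Finset (G × G) := Finset.univ.filter (fun q : G × G =>
      q.2 ∈ A ∧ q.2 * q.1 ∈ A ∧ q.1 * q.2 ∈ A) with hS
  set T : Finset (G × G × G) := Finset.univ.filter (fun p : G × G × G =>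
      p.1 * p.2.1 ∈ A ∧ p.1 * p.2.2 * p.1⁻¹ ∈ A ∧ p.2.1⁻¹ * p.2.2 * p.2.1 ∈ A) with hT
  set D : Finset (G × G × G) := Finset.univ.filter (fun p : G × G × G =>
      p.1 * p.2.1 ∈ A ∧ p.2.2 = p.2.1 * p.1) with hD
  have hDT : D ⊆ T := by
    rintro ⟨a, b, c⟩ hp
    simp only [hD, hT, mem_filter, mem_univ, true_and] at hp ⊢
    obtain ⟨h1, h2⟩ := hp
    subst h2
    refine ⟨h1, ?_, ?_⟩
    · have : a * (b * a) * a⁻¹ = a * b := by group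
      rwa [this]
    · have : b⁻¹ * (b * a) * b = a * b := by group
      rwa [this]
  haveI hED : ExplicitDisjoint D := by
    constructor
    · intro a b c a' h h'
      simp only [hD, mem_filter, mem_univ, true_and] at h h'
      exact mul_left_cancel (h.2 ▸ h'.2)
    · intro a b c b' h h'
      simp only [hD, mem_filter, mem_univ, true_and] at h h'
      exact mul_right_cancel (h.2 ▸ h'.2)
    · intro a b c c' h h'
      simp only [hD, mem_filter, mem_univ, true_and] at h h'
      rw [h.2, h'.2]
  have hDcard : #D = Fintype.card G * #A := by
    rw [← card_univ (α := G), ← card_product]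
    refine card_nbij' (fun p => (p.1, p.1 * p.2.1))
      (fun q => (q.1, q.1⁻¹ * q.2, q.1⁻¹ * q.2 * q.1)) ?_ ?_ ?_ ?_
    · rintro ⟨a, b, c⟩ hp
      simp only [mem_coe, hD, mem_filter, mem_univ, true_and] at hp
      simp [hp.1]
    · rintro ⟨a, x⟩ hq
      simp only [mem_coe, mem_product, mem_univ, true_and] at hq
      simp only [mem_coe, hD, mem_filter, mem_univ, true_and]
      constructor
      · have : a * (a⁻¹ * x) = x := by group
        rwa [this]
      · group
    · rintro ⟨a, b, c⟩ hp
      simp only [mem_coe, hD, mem_filter, mem_univ, true_and] at hp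
      obtain ⟨-, h2⟩ := hp
      subst h2
      simp only [Prod.mk.injEq]
      exact ⟨trivial, by group, by group⟩
    · rintro ⟨a, x⟩ hq
      simp only [Prod.mk.injEq]
      exact ⟨trivial, by group⟩
  have hTcard : #T = #S * Fintype.card G := by
    rw [← card_univ (α := G), ← card_product]
    refine card_nbij' (fun p => ((p.2.1⁻¹ * p.2.2 * p.1⁻¹, p.1 * p.2.1), p.1))
      (fun q => (q.2, q.2⁻¹ * q.1.2, q.2⁻¹ * (q.1.2 * q.1.1) * q.2)) ?_ ?_ ?_ ?_
    · rintro ⟨a, b, c⟩ hp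
      simp only [mem_coe, hT, mem_filter, mem_univ, true_and] at hp
      obtain ⟨h1, h2, h3⟩ := hp
      simp only [mem_coe, mem_product, hS, mem_filter, mem_univ, true_and, and_true]
      refine ⟨h1, ?_, ?_⟩
      · have : a * b * (b⁻¹ * c * a⁻¹) = a * c * a⁻¹ := by group
        rwa [this]
      · have : b⁻¹ * c * a⁻¹ * (a * b) = b⁻¹ * c * b := by group
        rwa [this]
    · rintro ⟨⟨g, x⟩, a⟩ hq
      simp only [mem_coe, mem_product, hS, mem_filter, mem_univ, true_and, and_true] at hq
      obtain ⟨h1, h2, h3⟩ := hq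
      simp only [mem_coe, hT, mem_filter, mem_univ, true_and]
      refine ⟨?_, ?_, ?_⟩
      · have : a * (a⁻¹ * x) = x := by group
        rwa [this]
      · have : a * (a⁻¹ * (x * g) * a) * a⁻¹ = x * g := by group
        rwa [this]
      · have : (a⁻¹ * x)⁻¹ * (a⁻¹ * (x * g) * a) * (a⁻¹ * x) = g * x := by group
        rwa [this]
    · rintro ⟨a, b, c⟩ hp
      simp only [Prod.mk.injEq]
      exact ⟨trivial, by group, by group⟩
    · rintro ⟨⟨g, x⟩, a⟩ hq
      simp only [Prod.mk.injEq]
      exact ⟨⟨by group, by group⟩, trivial⟩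
  have hcard3 : (Fintype.card (G ⊕ G ⊕ G) : ℝ) = 3 * n := by
    simp only [Fintype.card_sum, hn]
    push_cast
    ring
  have hfar : (graph T).FarFromTriangleFree (δ' / 9) := by
    apply farFromTriangleFree_of_disjoint_triangles (D.map toTriangle)
    · intro s hs
      simp only [mem_map] at hs
      obtain ⟨p, hp, rfl⟩ := hs
      exact mem_cliqueFinset_iff.2 (toTriangle_is3Clique (hDT hp))
    · exact map_toTriangle_disjoint D
    · rw [card_map]
      push_cast
      rw [hcard3, hDcard]
      push_cast
      have h1 : δ' * n ≤ (#A : ℝ) := le_trans (by nlinarith [min_le_left δ 1]) hA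
      nlinarith
  have hcount := hfar.le_card_cliqueFinset
  rw [hcard3] at hcount
  have hclique : (graph T).cliqueFinset 3 ⊆ T.image toTriangle := by
    intro s hs
    rw [mem_cliqueFinset_iff, is3Clique_iff] at hs
    obtain ⟨x, y, z, hxy, hxz, hyz, rfl⟩ := hs
    obtain ⟨a, b, c, habc, hab, hac, hbc⟩ := graph_triple hxy hxz hyz
    rw [mem_image]
    refine ⟨(a, b, c), ?_, by rw [toTriangle_apply]; exact habc⟩
    obtain ⟨c', hc'⟩ := Graph.in₀₁_iff.1 hab
    obtain ⟨b', hb'⟩ := Graph.in₀₂_iff.1 hac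
    obtain ⟨a', ha'⟩ := Graph.in₁₂_iff.1 hbc
    simp only [hT, mem_filter, mem_univ, true_and] at hc' hb' ha' ⊢
    exact ⟨hc'.1, hb'.2.1, ha'.2.2⟩
  have h2 : ((#((graph T).cliqueFinset 3) : ℕ) : ℝ) ≤ (#T : ℝ) := by
    have := (card_le_card hclique).trans (card_image_le (s := T) (f := toTriangle))
    exact_mod_cast this
  have h3 : triangleRemovalBound (δ' / 9) * (3 * n) ^ 3 ≤ (#S : ℝ) * n := by
    calc triangleRemovalBound (δ' / 9) * (3 * n) ^ 3
        ≤ (#((graph T).cliqueFinset 3) : ℝ) := hcount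
      _ ≤ (#T : ℝ) := h2
      _ = (#S : ℝ) * n := by rw [hTcard]; push_cast; ring
  have hfinal : triangleRemovalBound (δ' / 9) * 27 * n ^ 2 * n ≤ (#S : ℝ) * n := by
    calc triangleRemovalBound (δ' / 9) * 27 * n ^ 2 * n
        = triangleRemovalBound (δ' / 9) * (3 * n) ^ 3 := by ring
      _ ≤ (#S : ℝ) * n := h3
  exact le_of_mul_le_mul_right hfinal hn0
end

section
/- For every δ > 0 there exist N and ε > 0 such that: if G is a finite group with |G| ≥ N and A ⊆ G satisfies |A| ≥ δ|G|, then there exists a nonidentity g ∈ G with |A ∩ g⁻¹A ∩ Ag⁻¹| ≥ ε|G|. In particular there exist a nonidentity g and x ∈ G with x, xg, gx all in A. -/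
open Finset SimpleGraph SimpleGraph.TripartiteFromTriangles Sum3

set_option linter.unusedSectionVars false

variable {G : Type} [Group G] [Fintype G] [DecidableEq G]

private def triv (A : Finset G) : Finset (G × G × G) :=
  (Finset.univ ×ˢ A).map ⟨fun p => (p.1, p.1 * p.2, p.1 * p.2 * p.1⁻¹),
    by
      rintro ⟨a, x⟩ ⟨a', x'⟩ h
      simp only [Prod.mk.injEq] at h
      obtain ⟨rfl, h2, -⟩ := h
      exact Prod.ext rfl (mul_left_cancel h2)⟩

private lemma mem_triv {A : Finset G} {a b c : G} :
    (a, b, c) ∈ triv A ↔ a⁻¹ * b ∈ A ∧ c = b * a⁻¹ := by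
  constructor
  · rintro h
    simp only [triv, mem_map, mem_product, Function.Embedding.coeFn_mk, Prod.mk.injEq] at h
    obtain ⟨⟨a', x⟩, ⟨-, hx⟩, rfl, rfl, rfl⟩ := h
    refine ⟨by simpa using hx, by group⟩
  · rintro ⟨hx, rfl⟩
    simp only [triv, mem_map, mem_product, Function.Embedding.coeFn_mk]
    exact ⟨(a, a⁻¹ * b), ⟨mem_univ _, hx⟩, by simp [mul_assoc]⟩

private instance (A : Finset G) : ExplicitDisjoint (triv A) := by
  constructor
  · intro a b c a' h h'
    rw [mem_triv] at h h'
    exact inv_injective (mul_left_cancel (h.2.symm.trans h'.2))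
  · intro a b c b' h h'
    rw [mem_triv] at h h'
    exact mul_right_cancel (h.2.symm.trans h'.2)
  · intro a b c c' h h'
    rw [mem_triv] at h h'
    exact h.2.trans h'.2.symm

/-- All instance triples. -/
private def inst (A : Finset G) : Finset (G × G × G) :=
  Finset.univ.filter fun p =>
    p.1⁻¹ * p.2.1 ∈ A ∧ p.1⁻¹ * p.2.2 * p.1 ∈ A ∧ p.2.1⁻¹ * p.2.2 * p.2.1 ∈ A

private lemma clique_sub (A : Finset G) :
    (graph (triv A)).cliqueFinset 3 ⊆ (inst A).map toTriangle := by
  intro s hs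
  rw [mem_cliqueFinset_iff, is3Clique_iff] at hs
  obtain ⟨x, y, z, hxy, hxz, hyz, rfl⟩ := hs
  obtain ⟨a, b, c, habc, hab, hac, hbc⟩ := graph_triple hxy hxz hyz
  rw [mem_map]
  refine ⟨(a, b, c), ?_, habc⟩
  obtain ⟨c', hc'⟩ := Graph.in₀₁_iff.1 hab
  obtain ⟨b', hb'⟩ := Graph.in₀₂_iff.1 hac
  obtain ⟨a', ha'⟩ := Graph.in₁₂_iff.1 hbc
  rw [mem_triv] at hc' hb' ha'
  rw [inst, mem_filter]
  refine ⟨mem_univ _, hc'.1, ?_, ?_⟩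
  · rw [hb'.2]
    simpa [mul_assoc] using hb'.1
  · rw [ha'.2]
    simpa [mul_assoc] using ha'.1

/-- Pattern pairs `(g, x)`. -/
private def pat (A : Finset G) : Finset (G × G) :=
  Finset.univ.filter fun p => p.2 ∈ A ∧ p.1 * p.2 ∈ A ∧ p.2 * p.1 ∈ A

private lemma inst_card (A : Finset G) :
    (inst A).card = (pat A).card * Fintype.card G := by
  rw [← Finset.card_univ, ← card_product (pat A) Finset.univ]
  refine card_bij' (fun p _ => ((p.2.1⁻¹ * p.2.2 * p.1, p.1⁻¹ * p.2.1), p.1))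
      (fun q _ => (q.2, q.2 * q.1.2, q.2 * q.1.2 * q.1.1 * q.2⁻¹)) ?_ ?_ ?_ ?_
  · rintro ⟨a, b, c⟩ hp
    rw [inst, mem_filter] at hp
    obtain ⟨-, h1, h2, h3⟩ := hp
    rw [mem_product, pat, mem_filter]
    refine ⟨⟨mem_univ _, h1, ?_, ?_⟩, mem_univ _⟩
    · simpa [mul_assoc] using h3
    · simpa [mul_assoc] using h2
  · rintro ⟨⟨g, x⟩, a⟩ hq
    rw [mem_product, pat, mem_filter] at hq
    obtain ⟨⟨-, h1, h2, h3⟩, -⟩ := hq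
    rw [inst, mem_filter]
    refine ⟨mem_univ _, by simpa [mul_assoc] using h1, by simpa [mul_assoc] using h3,
      by simpa [mul_assoc] using h2⟩
  · rintro ⟨a, b, c⟩ hp
    simp only [Prod.mk.injEq]
    and_intros <;> first | trivial | group
  · rintro ⟨⟨g, x⟩, a⟩ hq
    simp only [Prod.mk.injEq]
    and_intros <;> first | trivial | group

private lemma pat_card_sum (A : Finset G) :
    (pat A).card = ∑ g : G, (A.filter fun x => g * x ∈ A ∧ x * g ∈ A).card := by
  rw [pat, Finset.card_filter, Fintype.sum_prod_type]
  refine Finset.sum_congr rfl fun g _ => ?_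
  rw [Finset.card_filter]
  simp_rw [ite_and]
  rw [Finset.sum_ite_mem, univ_inter]

theorem stmt9 (δ : ℝ) (hδ : 0 < δ) :
    ∃ (N : ℕ) (ε : ℝ), 0 < ε ∧
      ∀ (G : Type) [Group G] [Fintype G] [DecidableEq G],
        N ≤ Fintype.card G →
        ∀ A : Finset G, δ * Fintype.card G ≤ A.card →
          ∃ g : G, g ≠ 1 ∧
            ε * (Fintype.card G : ℝ)
              ≤ ((A.filter (fun x => g * x ∈ A ∧ x * g ∈ A)).card : ℝ) ∧
            ∃ x : G, x ∈ A ∧ x * g ∈ A ∧ g * x ∈ A := by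
  set δ' := min δ 1 with hδ'def
  have hδ'0 : 0 < δ' := lt_min hδ one_pos
  have hδ'1 : δ' ≤ 1 := min_le_right _ _
  set β := SimpleGraph.triangleRemovalBound (δ' / 9) with hβdef
  have hβ : 0 < β := SimpleGraph.triangleRemovalBound_pos (by positivity)
  refine ⟨⌈1/β⌉₊ + 1, β, hβ, ?_⟩
  intro G _ _ _ hNG A hA
  set n : ℕ := Fintype.card G with hn
  have hn1 : 1 ≤ n := le_trans (Nat.le_add_left 1 _) hNG
  have hnR : (1:ℝ) ≤ n := by exact_mod_cast hn1
  have hnβ : 1/β ≤ (n:ℝ) := by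
    calc (1/β : ℝ) ≤ ⌈1/β⌉₊ := Nat.le_ceil _
    _ ≤ n := by exact_mod_cast le_trans (Nat.le_succ _) hNG
  have hA' : δ' * n ≤ A.card :=
    le_trans (mul_le_mul_of_nonneg_right (min_le_left δ 1) (Nat.cast_nonneg n)) hA
  -- far from triangle free
  have hfar : (graph (triv A)).FarFromTriangleFree (δ' / 9) := by
    apply farFromTriangleFree
    have hcard : ((triv A).card : ℝ) = n * A.card := by
      rw [triv, card_map, card_product]
      simp [hn]
    rw [hcard]
    push_cast
    calc δ' / 9 * ((n : ℝ) + n + n)^2 = δ' * n * n := by ring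
    _ ≤ (A.card : ℝ) * n := by
        apply mul_le_mul_of_nonneg_right hA' (Nat.cast_nonneg n)
    _ = n * A.card := by ring
  have hcount := hfar.le_card_cliqueFinset
  have hcard3 : (Fintype.card (G ⊕ G ⊕ G) : ℝ) = 3 * n := by
    simp [hn]; ring
  rw [hcard3] at hcount
  have hsub := card_le_card (clique_sub A)
  rw [card_map] at hsub
  have hinst : ((inst A).card : ℝ) = (pat A).card * n := by
    rw [inst_card]; push_cast; rfl
  have hQ : 27 * β * (n:ℝ)^2 ≤ (pat A).card := by
    have h1 : β * (3 * (n:ℝ))^3 ≤ (pat A).card * n := by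
      calc β * (3 * (n:ℝ))^3 ≤ ((graph (triv A)).cliqueFinset 3).card := hcount
      _ ≤ ((inst A).card : ℝ) := by exact_mod_cast hsub
      _ = (pat A).card * n := hinst
    have hnpos : (0:ℝ) < n := by linarith
    nlinarith
  -- pigeonhole
  by_contra hcon
  push_neg at hcon
  have hbound : ∀ g : G, g ≠ 1 →
      ((A.filter fun x => g * x ∈ A ∧ x * g ∈ A).card : ℝ) ≤ β * n := by
    intro g hg
    by_contra h
    push_neg at h
    have hpos : 0 < (A.filter fun x => g * x ∈ A ∧ x * g ∈ A).card := by
      rcases Nat.eq_zero_or_pos (A.filter fun x => g * x ∈ A ∧ x * g ∈ A).card with h0 | h0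
      · rw [h0] at h
        simp only [Nat.cast_zero] at h
        nlinarith
      · exact h0
    obtain ⟨x, hx⟩ := card_pos.1 hpos
    rw [mem_filter] at hx
    exact hcon g hg h.le x hx.1 hx.2.2 hx.2.1
  have hsum : ((pat A).card : ℝ)
      = ∑ g : G, ((A.filter fun x => g * x ∈ A ∧ x * g ∈ A).card : ℝ) := by
    rw [pat_card_sum]
    push_cast
    rfl
  have hsplit : ((pat A).card : ℝ) ≤ (n : ℝ) + n * (β * n) := by
    rw [hsum, ← Finset.add_sum_erase _ _ (mem_univ (1 : G))]
    have h1 : ((A.filter fun x => (1:G) * x ∈ A ∧ x * 1 ∈ A).card : ℝ) ≤ n := by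
      have := le_trans (card_filter_le A (fun x => (1:G) * x ∈ A ∧ x * 1 ∈ A)) (card_le_univ A)
      rw [← card_univ] at this
      exact_mod_cast this
    have h2 : ∑ g ∈ univ.erase (1:G),
        ((A.filter fun x => g * x ∈ A ∧ x * g ∈ A).card : ℝ) ≤ n * (β * n) := by
      calc ∑ g ∈ univ.erase (1:G),
          ((A.filter fun x => g * x ∈ A ∧ x * g ∈ A).card : ℝ)
          ≤ (univ.erase (1:G)).card • (β * n) :=
            Finset.sum_le_card_nsmul _ _ _ fun g hg => hbound g (Finset.ne_of_mem_erase hg)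
        _ = ((univ.erase (1:G)).card : ℝ) * (β * n) := by rw [nsmul_eq_mul]
        _ ≤ (n : ℝ) * (β * n) := by
            have : (univ.erase (1:G)).card ≤ n := le_trans (card_erase_le) (by rw [card_univ])
            have hb : (0:ℝ) ≤ β * n := by positivity
            exact mul_le_mul_of_nonneg_right (by exact_mod_cast this) hb
    linarith
  have h1βn : (1:ℝ) ≤ β * n := by
    rw [div_le_iff₀ hβ] at hnβ
    linarith [hnβ]
  nlinarith [hQ, hsplit, h1βn, hnR, hβ]
end

section
/- Let G be a finite group, F a field, and ρ : G → GL_d(F) a linear representation with F = ℂ. Suppose G is perfect (G = [G,G]) and has no proper normal subgroup of index less than m. Then every nontrivial unitary representation of G has dimension greater than (1/2)√(log m) (i.e., G is (√(log m)/2)-quasirandom). -/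
open scoped Pointwise
open scoped commutatorElement

open Complex in
lemma aux_rot (lam : ℂ) (habs : ‖lam‖ = 1) (hne : lam ≠ 1) :
    ∃ j : ℕ, (lam ^ j).re ≤ -(1/2) := by
  set th := Complex.arg lam with hth
  have hlam : lam = Complex.exp (th * Complex.I) := by
    conv_lhs => rw [← Complex.norm_mul_exp_arg_mul_I lam]
    rw [habs]; simp [hth]
  have hth0 : th ≠ 0 := by
    intro h
    apply hne
    rw [hlam, h]; simp
  have hre : ∀ j : ℕ, (lam ^ j).re = Real.cos (j * th) := by
    intro j
    rw [hlam, ← Complex.exp_nat_mul]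
    have : ((j : ℂ) * (th * Complex.I)) = ((j * th : ℝ) : ℂ) * Complex.I := by
      push_cast; ring
    rw [this, Complex.exp_ofReal_mul_I_re]
  -- work with t = |th| ∈ (0, π]
  set t := |th| with htdef
  have ht0 : 0 < t := abs_pos.mpr hth0
  have htpi : t ≤ Real.pi := Complex.abs_arg_le_pi lam
  have hpi := Real.pi_pos
  -- find j ≥ 1 with 2π/3 ≤ j t ≤ 4π/3
  obtain ⟨j, hj1, hj2⟩ : ∃ j : ℕ, 2 * Real.pi / 3 ≤ j * t ∧ (j : ℝ) * t ≤ 4 * Real.pi / 3 := by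
    rcases le_or_gt (2 * Real.pi / 3) t with h | h
    · exact ⟨1, by simpa using h, by push_cast; nlinarith⟩
    · refine ⟨⌈(2 * Real.pi / 3) / t⌉₊, ?_, ?_⟩
      · rw [← div_le_iff₀ ht0]
        exact Nat.le_ceil _
      · have hlt : (⌈(2 * Real.pi / 3) / t⌉₊ : ℝ) < (2 * Real.pi / 3) / t + 1 :=
          Nat.ceil_lt_add_one (by positivity)
        have := (mul_lt_mul_of_pos_right hlt ht0)
        rw [add_mul, one_mul, div_mul_cancel₀ _ ht0.ne'] at this
        linarith
  refine ⟨j, ?_⟩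
  have hcos : (lam ^ j).re = Real.cos ((j : ℝ) * t) := by
    rw [hre j]
    rcases abs_choice th with h | h
    · rw [htdef, h]
    · rw [htdef, h, mul_neg, Real.cos_neg]
  rw [hcos]
  -- cos s ≤ -1/2 on [2π/3, 4π/3]
  set s := (j : ℝ) * t
  have h1 : Real.cos s = -Real.cos (Real.pi - s) := by
    rw [Real.cos_pi_sub]; ring
  have h2 : |Real.pi - s| ≤ Real.pi / 3 := by
    rw [abs_le]; constructor <;> nlinarith
  have h3 : (1:ℝ)/2 ≤ Real.cos (Real.pi - s) := by
    rw [← Real.cos_abs (Real.pi - s), ← Real.cos_pi_div_three]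
    exact Real.cos_le_cos_of_nonneg_of_le_pi (abs_nonneg _) (by linarith) h2
  linarith [h1, h3]

open MeasureTheory Metric
open scoped ENNReal

lemma aux_pack {E : Type*} [NormedAddCommGroup E] [NormedSpace ℝ E]
    [FiniteDimensional ℝ E] [Nontrivial E] {ι : Type*} [Fintype ι] (f : ι → E)
    (hb : ∀ i, ‖f i‖ ≤ 1) (hsep : ∀ i j, i ≠ j → 2/5 ≤ ‖f i - f j‖) :
    Fintype.card ι ≤ 6 ^ (Module.finrank ℝ E) := by
  classical
  borelize E
  set n := Module.finrank ℝ E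
  set μ : Measure E := (Module.finBasis ℝ E).addHaar with hμ
  have hdisj : Pairwise (Function.onFun Disjoint fun i => ball (f i) (1/5)) := by
    intro i j hij
    refine ball_disjoint_ball ?_
    rw [dist_eq_norm]
    linarith [hsep i j hij]
  have hsub : (⋃ i, ball (f i) (1/5)) ⊆ ball (0 : E) (6/5) := by
    intro x hx
    simp only [Set.mem_iUnion, mem_ball, dist_eq_norm] at hx ⊢
    obtain ⟨i, hi⟩ := hx
    rw [sub_zero]
    calc ‖x‖ = ‖(x - f i) + f i‖ := by rw [sub_add_cancel]
    _ ≤ ‖x - f i‖ + ‖f i‖ := norm_add_le _ _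
    _ < 6/5 := by linarith [hb i]
  have hcount : μ (⋃ i, ball (f i) (1/5)) = (Fintype.card ι : ℝ≥0∞) * μ (ball 0 (1/5)) := by
    rw [measure_iUnion hdisj (fun i => measurableSet_ball)]
    rw [tsum_fintype]
    have : ∀ i, μ (ball (f i) (1/5)) = μ (ball (0:E) (1/5)) := fun i =>
      Measure.addHaar_ball_center μ (f i) _
    simp only [this, Finset.sum_const, Finset.card_univ, nsmul_eq_mul]
  have hle : (Fintype.card ι : ℝ≥0∞) * μ (ball 0 (1/5)) ≤ μ (ball (0:E) (6/5)) := by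
    rw [← hcount]; exact measure_mono hsub
  rw [Measure.addHaar_ball μ _ (by norm_num : (0:ℝ) ≤ 1/5),
      Measure.addHaar_ball μ _ (by norm_num : (0:ℝ) ≤ 6/5)] at hle
  have hV0 : μ (ball (0:E) 1) ≠ 0 := (measure_ball_pos μ _ one_pos).ne'
  have hVtop : μ (ball (0:E) 1) ≠ ⊤ := measure_ball_lt_top.ne
  rw [← mul_assoc] at hle
  have hle2 : (Fintype.card ι : ℝ≥0∞) * ENNReal.ofReal ((1/5) ^ n) ≤
      ENNReal.ofReal ((6/5) ^ n) := (ENNReal.mul_le_mul_iff_left hV0 hVtop).mp hle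
  have hle3 : (Fintype.card ι : ℝ≥0∞) ≤ ((6 ^ n : ℕ) : ℝ≥0∞) := by
    have h5 := mul_le_mul_left hle2 (ENNReal.ofReal ((5:ℝ) ^ n))
    rw [mul_assoc, ← ENNReal.ofReal_mul (by positivity), ← ENNReal.ofReal_mul (by positivity),
        ← mul_pow, ← mul_pow] at h5
    norm_num at h5
    calc (Fintype.card ι : ℝ≥0∞) ≤ ENNReal.ofReal ((6:ℝ) ^ n) := by simpa using h5
    _ = ((6 ^ n : ℕ) : ℝ≥0∞) := by
        rw [← ENNReal.ofReal_natCast]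
        congr 1
        push_cast
        ring
  exact_mod_cast hle3
open scoped Pointwise



lemma aux_gap {A : Type*} [CStarAlgebra A] [Nontrivial A] {w : A}
    (hw : w ∈ unitary A) (hw1 : w ≠ 1) : ∃ j : ℕ, Real.sqrt 3 ≤ ‖w ^ j - 1‖ := by
  obtain ⟨h1, h2⟩ := Unitary.mem_iff.mp hw
  haveI : IsStarNormal w := ⟨by rw [Commute, SemiconjBy, h1, h2]⟩
  have hsn : IsStarNormal (w - 1) := by
    constructor
    rw [Commute, SemiconjBy, star_sub, star_one]
    noncomm_ring
    rw [h1, h2]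
    abel
  have halg : ((algebraMap ℂ A) 1) = (1:A) := map_one _
  have hσsub : spectrum ℂ (w - 1) = spectrum ℂ w - ({1} : Set ℂ) := by
    have h := spectrum.sub_singleton_eq (R := ℂ) w 1
    rw [halg] at h
    exact h.symm
  have hspec : ∃ lam ∈ spectrum ℂ w, lam ≠ 1 := by
    by_contra h
    push_neg at h
    have hσ : spectrum ℂ w = {1} :=
      Set.eq_singleton_iff_nonempty_unique_mem.mpr ⟨spectrum.nonempty w, h⟩
    have hσ0 : spectrum ℂ (w - 1) = {0} := by
      rw [hσsub, hσ, Set.singleton_sub_singleton, sub_self]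
    have hrad : spectralRadius ℂ (w - 1) = 0 := by
      simp [spectralRadius, hσ0]
    have := IsStarNormal.spectralRadius_eq_nnnorm (w - 1)
    rw [hrad] at this
    apply hw1
    have : ‖w - 1‖₊ = 0 := by exact_mod_cast this.symm
    rw [← sub_eq_zero]
    simpa using this
  obtain ⟨lam, hlam, hlam1⟩ := hspec
  have habs : ‖lam‖ = 1 := by
    have := spectrum.subset_circle_of_unitary hw hlam
    simpa using mem_sphere_zero_iff_norm.mp this
  obtain ⟨j, hj⟩ := aux_rot lam habs hlam1
  refine ⟨j, ?_⟩
  have hmem : lam ^ j ∈ spectrum ℂ (w ^ j) := by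
    rw [spectrum.map_pow]
    exact ⟨lam, hlam, rfl⟩
  have hmem2 : lam ^ j - 1 ∈ spectrum ℂ (w ^ j - 1) := by
    have : spectrum ℂ (w ^ j - 1) = spectrum ℂ (w ^ j) - ({1} : Set ℂ) := by
      have h := spectrum.sub_singleton_eq (R := ℂ) (w ^ j) 1
      rw [halg] at h
      exact h.symm
    rw [this]
    exact Set.sub_mem_sub hmem rfl
  have hnorm : ‖lam ^ j - 1‖ ≤ ‖w ^ j - 1‖ := spectrum.norm_le_norm_of_mem hmem2
  refine le_trans ?_ hnorm
  have habsj : ‖lam ^ j‖ = 1 := by rw [norm_pow, habs, one_pow]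
  have hnsq : Complex.normSq (lam ^ j) = 1 := by
    rw [← Complex.sq_norm, habsj, one_pow]
  have h3 : (3:ℝ) ≤ Complex.normSq (lam ^ j - 1) := by
    have hexp : Complex.normSq (lam ^ j - 1) =
        (lam ^ j).re * (lam ^ j).re + (lam ^ j).im * (lam ^ j).im - 2 * (lam ^ j).re + 1 := by
      simp [Complex.normSq_apply, Complex.sub_re, Complex.sub_im]
      ring
    rw [Complex.normSq_apply] at hnsq
    rw [hexp, hnsq]
    linarith
  rw [Complex.norm_def]
  calc Real.sqrt 3 ≤ Real.sqrt (Complex.normSq (lam ^ j - 1)) := Real.sqrt_le_sqrt h3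
  _ = _ := rfl



lemma aux_comm_norm {A : Type*} [CStarAlgebra A] {u v : A}
    (hu : u ∈ unitary A) (hv : v ∈ unitary A) :
    ‖u * v * star u * star v - 1‖ ≤ 2 * ‖u - 1‖ * ‖v - 1‖ := by
  obtain ⟨hu1, hu2⟩ := Unitary.mem_iff.mp hu
  obtain ⟨hv1, hv2⟩ := Unitary.mem_iff.mp hv
  have e0 : v * u * (star u * star v) = 1 := by
    rw [← mul_assoc (v * u), mul_assoc v u, hu2, mul_one, hv2]
  have e1 : u * v * star u * star v - 1 = (u * v - v * u) * (star u * star v) := by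
    rw [sub_mul, mul_assoc (u * v), e0]
  have e2 : ‖u * v * star u * star v - 1‖ = ‖u * v - v * u‖ := by
    rw [e1]
    exact CStarRing.norm_mul_mem_unitary _ (mul_mem (Unitary.star_mem hu) (Unitary.star_mem hv))
  have e3 : u * v - v * u = (u - 1) * (v - 1) - (v - 1) * (u - 1) := by noncomm_ring
  rw [e2, e3]
  calc ‖(u - 1) * (v - 1) - (v - 1) * (u - 1)‖
      ≤ ‖(u - 1) * (v - 1)‖ + ‖(v - 1) * (u - 1)‖ := norm_sub_le _ _
  _ ≤ ‖u - 1‖ * ‖v - 1‖ + ‖v - 1‖ * ‖u - 1‖ := by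
      gcongr <;> exact norm_mul_le _ _
  _ = 2 * ‖u - 1‖ * ‖v - 1‖ := by ring

lemma aux_frob {A : Type*} [CStarAlgebra A] {G : Type*} [Group G] [Fintype G]
    (f : G →* unitary A) (a b : G)
    (ha : ‖(f a : A) - 1‖ < 2/5) (hb : ‖(f b : A) - 1‖ < 2/5) :
    Commute (f a) (f b) := by
  classical
  set F : G → ℝ := fun g => ‖(f g : A) - 1‖ with hF
  -- commutator coercion
  have hcoe : ∀ x y : G, (f ⁅x, y⁆ : A) =
      (f x : A) * (f y : A) * star (f x : A) * star (f y : A) := by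
    intro x y
    rw [map_commutatorElement, commutatorElement_def]
    simp only [MulMemClass.coe_mul, ← Unitary.star_eq_inv, Unitary.coe_star]
  have hkey : ∀ x y : G, F ⁅x, y⁆ ≤ 2 * F x * F y := by
    intro x y
    rw [hF]
    simp only
    rw [hcoe]
    exact aux_comm_norm (f x).prop (f y).prop
  by_contra hab
  set P : Finset (G × G) :=
    Finset.univ.filter (fun p => F p.1 < 2/5 ∧ F p.2 < 2/5 ∧ ¬ Commute (f p.1) (f p.2)) with hP
  have hne : P.Nonempty := ⟨(a, b), by simp [hP, hF, ha, hb, hab]⟩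
  obtain ⟨p, hpP, hpmin⟩ := P.exists_min_image (fun p => F p.1 + F p.2) hne
  obtain ⟨hp1, hp2, hp3⟩ : F p.1 < 2/5 ∧ F p.2 < 2/5 ∧ ¬ Commute (f p.1) (f p.2) := by
    simpa [hP] using hpP
  set x := p.1
  set y := p.2
  have hx1 : (f x : A) ≠ 1 := by
    intro h
    apply hp3
    have : f x = 1 := Subtype.ext (by simpa using h)
    rw [this]
    exact Commute.one_left _
  have hy1 : (f y : A) ≠ 1 := by
    intro h
    apply hp3
    have : f y = 1 := Subtype.ext (by simpa using h)
    rw [this]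
    exact Commute.one_right _
  have hFx : 0 < F x := by
    rw [hF]; simp only; rw [norm_pos_iff, sub_ne_zero]; exact hx1
  have hFy : 0 < F y := by
    rw [hF]; simp only; rw [norm_pos_iff, sub_ne_zero]; exact hy1
  have hc := hkey x y
  have hcx : F ⁅x, y⁆ < F x := by nlinarith
  have hcy : F ⁅x, y⁆ < F y := by nlinarith
  have hcs : F ⁅x, y⁆ < 2/5 := lt_trans hcx hp1
  by_cases hcwx : Commute (f ⁅x, y⁆) (f x)
  · by_cases hcwy : Commute (f ⁅x, y⁆) (f y)
    · -- the hard case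
      have hw1 : (f ⁅x, y⁆ : A) ≠ 1 := by
        intro h
        apply hp3
        apply commutatorElement_eq_one_iff_commute.mp
        rw [← map_commutatorElement]
        exact Subtype.ext (by simpa using h)
      haveI : Nontrivial A := nontrivial_of_ne _ _ hw1
      have huv : f x * f y = f ⁅x, y⁆ * f y * f x := by
        rw [← map_mul, ← map_mul, ← map_mul]
        congr 1
        group
      have hsemi : SemiconjBy (f x) (f y) (f ⁅x, y⁆ * f y) := by
        rw [SemiconjBy, huv]
      have hkey2 : ∀ j : ℕ, f x * (f y) ^ j = (f ⁅x, y⁆) ^ j * (f y) ^ j * f x := by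
        intro j
        have h := (hsemi.pow_right j).eq
        rw [hcwy.mul_pow] at h
        rw [h, mul_assoc]

      have hcj : ∀ j : ℕ, (f ⁅x, y⁆) ^ j =
          f x * (f y) ^ j * (f x)⁻¹ * ((f y) ^ j)⁻¹ := by
        intro j
        rw [hkey2]
        group
      have hcoe2 : ∀ j : ℕ, ((f ⁅x, y⁆ : A)) ^ j =
          (f x : A) * ((f y : A)) ^ j * star (f x : A) * star (((f y : A)) ^ j) := by
        intro j
        have h := congrArg (fun z : unitary A => (z : A)) (hcj j)
        simpa only [SubmonoidClass.coe_pow, MulMemClass.coe_mul, ← Unitary.star_eq_inv,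
          Unitary.coe_star] using h
      have hvj : ∀ j : ℕ, ‖((f y : A)) ^ j - 1‖ ≤ 2 := by
        intro j
        calc ‖((f y : A)) ^ j - 1‖ ≤ ‖((f y : A)) ^ j‖ + ‖(1 : A)‖ := norm_sub_le _ _
        _ ≤ 2 := by
            rw [CStarRing.norm_of_mem_unitary (pow_mem (f y).prop j), norm_one]
            norm_num
      have hbound : ∀ j : ℕ, ‖((f ⁅x, y⁆ : A)) ^ j - 1‖ ≤ 8/5 := by
        intro j
        rw [hcoe2 j]
        calc ‖(f x : A) * ((f y : A)) ^ j * star (f x : A) * star (((f y : A)) ^ j) - 1‖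
            ≤ 2 * ‖(f x : A) - 1‖ * ‖((f y : A)) ^ j - 1‖ :=
              aux_comm_norm (f x).prop (pow_mem (f y).prop j)
        _ ≤ 8/5 := by nlinarith [hvj j, hp1, norm_nonneg ((f x : A) - 1),
              norm_nonneg (((f y : A)) ^ j - 1)]
      obtain ⟨j, hj⟩ := aux_gap (f ⁅x, y⁆).prop hw1
      have h3 := Real.sq_sqrt (by norm_num : (0:ℝ) ≤ 3)
      nlinarith [hbound j, Real.sqrt_nonneg 3]
    · have hmem : (⁅x, y⁆, y) ∈ P := by simp [hP, hcs, hp2, hcwy, -map_commutatorElement]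
      have := hpmin _ hmem
      simp only at this
      nlinarith
  · have hmem : (⁅x, y⁆, x) ∈ P := by simp [hP, hcs, hp1, hcwx, -map_commutatorElement]
    have := hpmin _ hmem
    simp only at this
    nlinarith





lemma aux_main {A : Type*} [CStarAlgebra A] [FiniteDimensional ℝ A] [Nontrivial A]
    {G : Type*} [Group G] [Fintype G] (f : G →* unitary A) :
    ∃ N : Subgroup G, N.Normal ∧ (N = ⊤ → ∀ x y : G, Commute (f x) (f y)) ∧
      N.index ≤ 6 ^ (Module.finrank ℝ A) := by
  classical
  set S : Set G := {g | ‖(f g : A) - 1‖ < 2/5} with hS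
  set N := Subgroup.closure S with hNdef
  have hconj : ∀ (g h : G), h ∈ S → g * h * g⁻¹ ∈ S := by
    intro g h hh
    simp only [hS, Set.mem_setOf_eq] at hh ⊢
    have hq2 : (f g : A) * star (f g : A) = 1 := (Unitary.mem_iff.mp (f g).prop).2
    have hcoe : (f (g * h * g⁻¹) : A) =
        (f g : A) * ((f h : A) - 1) * star (f g : A) + 1 := by
      simp only [map_mul, map_inv, MulMemClass.coe_mul, ← Unitary.star_eq_inv, Unitary.coe_star]
      rw [mul_sub, mul_one, sub_mul, hq2, sub_add_cancel]
    rw [hcoe, add_sub_cancel_right,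
      CStarRing.norm_mul_mem_unitary _ (Unitary.star_mem (f g).prop),
      CStarRing.norm_mem_unitary_mul _ (f g).prop]
    exact hh
  have hN : N.Normal := by
    constructor
    intro n hn g
    induction hn using Subgroup.closure_induction with
    | mem z hz => exact Subgroup.subset_closure (hconj g z hz)
    | one => simpa using N.one_mem
    | mul u v hu hv ihu ihv =>
        have e : g * (u * v) * g⁻¹ = (g * u * g⁻¹) * (g * v * g⁻¹) := by group
        rw [e]; exact N.mul_mem ihu ihv
    | inv u hu ihu =>
        have e : g * u⁻¹ * g⁻¹ = (g * u * g⁻¹)⁻¹ := by group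
        rw [e]; exact N.inv_mem ihu
  refine ⟨N, hN, ?_, ?_⟩
  · intro h x y
    have hx : x ∈ N := h ▸ Subgroup.mem_top x
    have hy : y ∈ N := h ▸ Subgroup.mem_top y
    induction hx, hy using Subgroup.closure_induction₂ with
    | mem s t hs ht => exact aux_frob f s t hs ht
    | one_left t ht => simp only [map_one]; exact Commute.one_left _
    | one_right s hs => simp only [map_one]; exact Commute.one_right _
    | mul_left s t z hs ht hz h1 h2 => simp only [map_mul]; exact h1.mul_left h2
    | mul_right s t z hs ht hz h1 h2 => simp only [map_mul]; exact h1.mul_right h2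
    | inv_left s t hs ht h1 => simp only [map_inv]; exact h1.inv_left
    | inv_right s t hs ht h1 => simp only [map_inv]; exact h1.inv_right
  · -- index bound
    haveI : Fintype (G ⧸ N) := Fintype.ofFinite _
    have hsep : ∀ q₁ q₂ : G ⧸ N, q₁ ≠ q₂ →
        2/5 ≤ ‖(f q₁.out : A) - (f q₂.out : A)‖ := by
      intro q₁ q₂ hq
      have hmem : ¬ ((q₁.out)⁻¹ * q₂.out ∈ N) := by
        intro hmem
        apply hq
        rw [← QuotientGroup.out_eq' q₁, ← QuotientGroup.out_eq' q₂]
        exact (QuotientGroup.eq ).mpr hmem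
      have hSm : (q₁.out)⁻¹ * q₂.out ∉ S := fun h => hmem (Subgroup.subset_closure h)
      have h25 : 2/5 ≤ ‖(f ((q₁.out)⁻¹ * q₂.out) : A) - 1‖ := by
        simp only [hS, Set.mem_setOf_eq, not_lt] at hSm
        exact hSm
      have hu1 : star (f q₁.out : A) * (f q₁.out : A) = 1 :=
        (Unitary.mem_iff.mp (f q₁.out).prop).1
      have hco : (f ((q₁.out)⁻¹ * q₂.out) : A) - 1 =
          star (f q₁.out : A) * ((f q₂.out : A) - (f q₁.out : A)) := by
        simp only [map_mul, map_inv, MulMemClass.coe_mul, ← Unitary.star_eq_inv,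
          Unitary.coe_star]
        rw [mul_sub, hu1]
      rw [hco, CStarRing.norm_mem_unitary_mul _ (Unitary.star_mem (f q₁.out).prop),
        norm_sub_rev] at h25
      exact h25
    have hbnd : ∀ q : G ⧸ N, ‖(f q.out : A)‖ ≤ 1 :=
      fun q => le_of_eq (CStarRing.norm_of_mem_unitary (f q.out).prop)
    have := aux_pack (fun q : G ⧸ N => (f q.out : A)) hbnd hsep
    rwa [Subgroup.index, Nat.card_eq_fintype_card]

open scoped Matrix.Norms.L2Operator

theorem stmt11 {G : Type*} [Group G] [Fintype G] (m : ℕ) (hm : 1 ≤ m)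
    (hperf : commutator G = ⊤)
    (hindex : ∀ N : Subgroup G, N.Normal → N ≠ ⊤ → m ≤ N.index) :
    ∀ (d : ℕ) (ρ : G →* Matrix.unitaryGroup (Fin d) ℂ), ρ ≠ 1 →
      Real.sqrt (Real.log m) / 2 < d := by
  intro d ρ hρ
  obtain ⟨g₀, hg₀⟩ : ∃ g, ρ g ≠ 1 := by
    by_contra h
    push_neg at h
    exact hρ (MonoidHom.ext fun g => h g)
  have hg₀' : (ρ g₀ : Matrix (Fin d) (Fin d) ℂ) ≠ 1 := fun h => hg₀ (Subtype.ext h)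
  haveI : Nontrivial (Matrix (Fin d) (Fin d) ℂ) := nontrivial_of_ne _ _ hg₀'
  have hd : 0 < d := by
    rcases Nat.eq_zero_or_pos d with h | h
    · subst h
      exact absurd (Subsingleton.elim ((ρ g₀ : Matrix (Fin 0) (Fin 0) ℂ)) 1) hg₀'
    · exact h
  haveI : CompleteSpace (Matrix (Fin d) (Fin d) ℂ) :=
    FiniteDimensional.complete ℂ _
  letI : CStarAlgebra (Matrix (Fin d) (Fin d) ℂ) :=
    { Matrix.instL2OpNormedRing, Matrix.instL2OpNormedAlgebra,
      Matrix.instCStarRing, (inferInstance : StarRing (Matrix (Fin d) (Fin d) ℂ)),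
      (inferInstance : CompleteSpace (Matrix (Fin d) (Fin d) ℂ)),
      (inferInstance : StarModule ℂ (Matrix (Fin d) (Fin d) ℂ)) with }
  haveI : FiniteDimensional ℝ (Matrix (Fin d) (Fin d) ℂ) := inferInstance
  obtain ⟨N, hNnormal, htop, hNindex⟩ := aux_main (A := Matrix (Fin d) (Fin d) ℂ) ρ
  have hNne : N ≠ ⊤ := by
    intro h
    apply hρ
    have hker : commutator G ≤ ρ.ker := by
      rw [commutator_def]
      rw [Subgroup.commutator_le]
      intro g₁ _ g₂ _
      rw [MonoidHom.mem_ker, map_commutatorElement]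
      exact commutatorElement_eq_one_iff_commute.mpr (htop h g₁ g₂)
    rw [hperf] at hker
    ext g
    have : ρ g = 1 := hker (Subgroup.mem_top g)
    simp [this]
  have hmN : m ≤ N.index := hindex N hNnormal hNne
  -- rank computation
  have hrank : Module.finrank ℝ (Matrix (Fin d) (Fin d) ℂ) = 2 * (d * d) := by
    have h2 := Module.finrank_mul_finrank ℝ ℂ (Matrix (Fin d) (Fin d) ℂ)
    rw [Complex.finrank_real_complex, Module.finrank_matrix] at h2
    simp only [Fintype.card_fin, Module.finrank_self, mul_one] at h2
    omega
  rw [hrank] at hNindex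
  -- numerics
  have hm0 : (0:ℝ) < m := by exact_mod_cast hm
  have h1 : (m:ℝ) ≤ (6:ℝ) ^ (2 * (d * d)) := by
    have := le_trans hmN hNindex
    exact_mod_cast this
  have h2 : Real.log m ≤ (2 * (d * d) : ℕ) * Real.log 6 := by
    calc Real.log m ≤ Real.log ((6:ℝ) ^ (2 * (d * d))) := Real.log_le_log hm0 h1
    _ = _ := Real.log_pow _ _
  have h6 : Real.log 6 < 2 := by
    rw [Real.log_lt_iff_lt_exp (by norm_num)]
    have he : Real.exp 2 = Real.exp 1 ^ 2 := by
      rw [← Real.exp_nat_mul]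
      norm_num
    have := Real.exp_one_gt_d9
    rw [he]
    nlinarith
  have hlog : Real.log m < 4 * (d:ℝ) ^ 2 := by
    have hd1 : (1:ℝ) ≤ d := by exact_mod_cast hd
    have hlog6 : 0 ≤ Real.log 6 := Real.log_nonneg (by norm_num)
    have h2' : Real.log m ≤ 2 * ((d:ℝ) * d) * Real.log 6 := by
      calc Real.log m ≤ (2 * (d * d) : ℕ) * Real.log 6 := h2
      _ = 2 * ((d:ℝ) * d) * Real.log 6 := by push_cast; ring
    have hdd : (0:ℝ) < 2 * ((d:ℝ) * d) := by nlinarith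
    have hmul := mul_lt_mul_of_pos_left h6 hdd
    rw [pow_two]
    nlinarith
  have h2d : (0:ℝ) < 2 * d := by positivity
  rw [div_lt_iff₀ (by norm_num : (0:ℝ) < 2)]
  have := (Real.sqrt_lt' (by positivity : (0:ℝ) < (d:ℝ) * 2)).mpr
    (by nlinarith : Real.log m < ((d:ℝ) * 2) ^ 2)
  linarith
end
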